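/- arXiv:2403.05490 — 2 statements merged into one kernel-verified Lean document; each statement's English description precedes it below -/
import Mathlib

section
/- Let X and Y be random variables (or random vectors) with joint density p_{XY} and marginals p_X, p_Y, and let F be any measurable real-valued function of (x,y). Then I(X;Y) ≥ E_{p_{XY}}[F(X,Y)] - E_{p_X ⊗ p_Y}[exp(F(X,Y))] + 1, where I(X;Y) = KL(p_{XY} ‖ p_X ⊗ p_Y). -/
open MeasureTheory

/-- Kullback–Leibler divergence `KL(μ ‖ ν) = ∫ log (dμ/dν) dμ`. -/
noncomputable def klDiv' {α : Type*} [MeasurableSpace α] (μ ν : Measure α) : ℝ :=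
  ∫ x, Real.log (μ.rnDeriv ν x).toReal ∂μ

theorem nwj_lower_bound {α β : Type*} [MeasurableSpace α] [MeasurableSpace β]
    (μ : Measure (α × β)) [IsProbabilityMeasure μ] (F : α × β → ℝ)
    (hF : Measurable F)
    (hac : μ ≪ (μ.map Prod.fst).prod (μ.map Prod.snd))
    (hFint : Integrable F μ)
    (hexp : Integrable (fun p => Real.exp (F p))
      ((μ.map Prod.fst).prod (μ.map Prod.snd)))
    (hlog : Integrable
      (fun p => Real.log
        (μ.rnDeriv ((μ.map Prod.fst).prod (μ.map Prod.snd)) p).toReal) μ) :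
    klDiv' μ ((μ.map Prod.fst).prod (μ.map Prod.snd))
      ≥ (∫ p, F p ∂μ)
        - (∫ p, Real.exp (F p) ∂((μ.map Prod.fst).prod (μ.map Prod.snd)))
        + 1 := by
  set ν := (μ.map Prod.fst).prod (μ.map Prod.snd) with hν
  haveI : IsProbabilityMeasure (μ.map Prod.fst) :=
    Measure.isProbabilityMeasure_map measurable_fst.aemeasurable
  haveI : IsProbabilityMeasure (μ.map Prod.snd) :=
    Measure.isProbabilityMeasure_map measurable_snd.aemeasurable
  haveI : IsProbabilityMeasure ν := by rw [hν]; infer_instance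
  set r : α × β → ℝ := fun x => (μ.rnDeriv ν x).toReal with hr
  set g : α × β → ℝ := fun x => Real.exp (F x) / r x with hg
  have hrm : Measurable r := (Measure.measurable_rnDeriv μ ν).ennreal_toReal
  have hgm : Measurable g := (hF.exp).div hrm
  -- μ-a.e. positivity and finiteness of rnDeriv
  have hpos : ∀ᵐ x ∂μ, 0 < μ.rnDeriv ν x := Measure.rnDeriv_pos hac
  have hfin : ∀ᵐ x ∂μ, μ.rnDeriv ν x < ⊤ := hac.ae_le (Measure.rnDeriv_lt_top μ ν)
  have hrpos : ∀ᵐ x ∂μ, 0 < r x := by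
    filter_upwards [hpos, hfin] with x h1 h2
    exact ENNReal.toReal_pos h1.ne' h2.ne
  -- pointwise inequality
  have hpt : ∀ᵐ x ∂μ, F x + 1 - g x ≤ Real.log (r x) := by
    filter_upwards [hrpos] with x hx
    have h := Real.add_one_le_exp (F x - Real.log (r x))
    rw [Real.exp_sub, Real.exp_log hx] at h
    have : F x - Real.log (r x) + 1 ≤ g x := h
    linarith
  -- pointwise bound in ENNReal
  have hptE : ∀ x, ENNReal.ofReal (g x) * μ.rnDeriv ν x ≤ ENNReal.ofReal (Real.exp (F x)) := by
    intro x
    rcases eq_or_ne (μ.rnDeriv ν x) 0 with h0 | h0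
    · simp [h0]
    rcases eq_or_ne (μ.rnDeriv ν x) ⊤ with ht | ht
    · simp [hg, hr, ht]
    have hx : 0 < r x := ENNReal.toReal_pos h0 ht
    have : ENNReal.ofReal (g x) * μ.rnDeriv ν x
        = ENNReal.ofReal (g x) * ENNReal.ofReal (r x) := by
      rw [hr]; congr 1; exact (ENNReal.ofReal_toReal ht).symm
    rw [this, ← ENNReal.ofReal_mul (by positivity), hg]
    simp only [div_mul_cancel₀ _ hx.ne', le_refl]
  -- lintegral bound
  have hwd : ν.withDensity (μ.rnDeriv ν) = μ := Measure.withDensity_rnDeriv_eq μ ν hac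
  have hlin : ∫⁻ x, ENNReal.ofReal (g x) ∂μ ≤ ∫⁻ x, ENNReal.ofReal (Real.exp (F x)) ∂ν := by
    rw [← hwd, lintegral_withDensity_eq_lintegral_mul ν (Measure.measurable_rnDeriv μ ν)
      (hgm.ennreal_ofReal)]
    exact lintegral_mono fun x => by
      simpa [mul_comm] using hptE x
  have hexpfin : ∫⁻ x, ENNReal.ofReal (Real.exp (F x)) ∂ν < ⊤ := by
    have := hexp.hasFiniteIntegral
    rwa [hasFiniteIntegral_iff_ofReal (Filter.Eventually.of_forall fun x => (Real.exp_pos _).le)]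
      at this
  have hgint : Integrable g μ := by
    refine ⟨hgm.aestronglyMeasurable, ?_⟩
    rw [hasFiniteIntegral_iff_ofReal ?_]
    · exact lt_of_le_of_lt hlin hexpfin
    · exact Filter.Eventually.of_forall fun x => by positivity
  have hgle : ∫ x, g x ∂μ ≤ ∫ p, Real.exp (F p) ∂ν := by
    rw [integral_eq_lintegral_of_nonneg_ae (Filter.Eventually.of_forall fun x => by positivity)
        hgm.aestronglyMeasurable,
      integral_eq_lintegral_of_nonneg_ae
        (Filter.Eventually.of_forall fun x => (Real.exp_pos _).le)
        hF.exp.aestronglyMeasurable]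
    exact ENNReal.toReal_mono hexpfin.ne hlin
  have h1 : Integrable (fun x => F x + 1) μ := hFint.add (integrable_const 1)
  have h2 : Integrable (fun x => F x + 1 - g x) μ := h1.sub hgint
  have hmono : ∫ x, (F x + 1 - g x) ∂μ ≤ ∫ x, Real.log (r x) ∂μ :=
    integral_mono_ae h2 hlog hpt
  have hsplit : ∫ x, (F x + 1 - g x) ∂μ = (∫ x, F x ∂μ) + 1 - ∫ x, g x ∂μ := by
    rw [integral_sub h1 hgint, integral_add hFint (integrable_const 1)]
    simp [measure_univ]
  have : klDiv' μ ν = ∫ x, Real.log (r x) ∂μ := rfl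
  rw [this, ge_iff_le]
  linarith [hmono, hsplit ▸ hmono, hgle]
end

section
/- With Σ_M = σ² I_M + σ₀² J_M and Σ̃_M = diag(σ² + σ₀², Σ_{M-1}), we have (1/2)[tr(Σ̃_M⁻¹ Σ_M) - M + log(det Σ̃_M / det Σ_M)] = (1/2) log[(1 + σ₀²/σ²)(1 - σ₀²/(σ² + M σ₀²))]. -/
open Matrix

/-- `Σ_M`: diagonal entries `σ² + σ₀²`, off-diagonal entries `σ₀²`. -/
noncomputable def SigM (M : ℕ) (σ σ₀ : ℝ) : Matrix (Fin M) (Fin M) ℝ :=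
  Matrix.of fun i j => if i = j then σ ^ 2 + σ₀ ^ 2 else σ₀ ^ 2

/-- `Σ̃_M`: the block-diagonal matrix `diag(σ² + σ₀², Σ_{M-1})`, i.e. `Σ_M` with the
off-diagonal entries in the first row and column replaced by `0`. -/
noncomputable def SigTildeM (M : ℕ) (σ σ₀ : ℝ) : Matrix (Fin M) (Fin M) ℝ :=
  Matrix.of fun i j =>
    if i = j then σ ^ 2 + σ₀ ^ 2 else if i.val = 0 ∨ j.val = 0 then 0 else σ₀ ^ 2

lemma sigT_transpose (M : ℕ) (σ σ₀ : ℝ) :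
    (SigTildeM M σ σ₀)ᵀ = SigTildeM M σ σ₀ := by
  ext i j
  simp only [SigTildeM, transpose_apply, of_apply]
  by_cases h : i = j
  · simp [h]
  · simp [h, Ne.symm h, or_comm]

/-- determinant of `Σ_n` -/
lemma sig_det (n : ℕ) (σ σ₀ : ℝ) (hσ : σ ≠ 0) :
    (SigM n σ σ₀).det = (σ ^ 2) ^ n * (1 + n * σ₀ ^ 2 / σ ^ 2) := by
  have key : SigM n σ σ₀
      = (σ ^ 2) • (1 + Matrix.replicateCol Unit (fun _ => σ₀ ^ 2 / σ ^ 2)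
          * Matrix.replicateRow Unit (fun _ => (1 : ℝ))) := by
    ext i j
    simp only [SigM, of_apply, Matrix.smul_apply, Matrix.add_apply, Matrix.mul_apply,
      Matrix.replicateCol_apply, Matrix.replicateRow_apply, Matrix.one_apply, Finset.univ_unique,
      Finset.sum_singleton, smul_eq_mul]
    by_cases h : i = j <;> simp [h] <;> field_simp
  rw [key, det_smul, det_one_add_replicateCol_mul_replicateRow]
  simp only [dotProduct, Finset.sum_const, Finset.card_univ, Fintype.card_fin,
    nsmul_eq_mul, smul_eq_mul, one_mul, mul_one]
  ring

lemma sigT_det (n : ℕ) (σ σ₀ : ℝ) :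
    (SigTildeM (n + 2) σ σ₀).det = (σ ^ 2 + σ₀ ^ 2) * (SigM (n + 1) σ σ₀).det := by
  have hsub : (SigTildeM (n + 2) σ σ₀).submatrix Fin.succ (Fin.succAbove 0)
      = SigM (n + 1) σ σ₀ := by
    ext i j
    simp only [submatrix_apply, Fin.succAbove_zero, SigTildeM, SigM, of_apply,
      Fin.succ_inj]
    by_cases h : i = j
    · simp [h]
    · simp [h, Fin.succ_ne_zero]
  rw [show (SigTildeM (n + 2) σ σ₀).det
      = ∑ j : Fin (n + 2), (-1) ^ (j : ℕ) * (SigTildeM (n + 2) σ σ₀) 0 j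
        * ((SigTildeM (n + 2) σ σ₀).submatrix Fin.succ j.succAbove).det from
    det_succ_row_zero _]
  rw [Finset.sum_eq_single 0]
  · rw [hsub]
    simp [SigTildeM]
  · intro j _ hj
    have : (SigTildeM (n + 2) σ σ₀) 0 j = 0 := by
      simp [SigTildeM, (Ne.symm hj)]
    simp [this]
  · simp

lemma adj_zero (n : ℕ) (σ σ₀ : ℝ) (i j : Fin (n + 2)) (hij : i ≠ j)
    (h0 : i.val = 0 ∨ j.val = 0) :
    (SigTildeM (n + 2) σ σ₀).adjugate i j = 0 := by
  have base : ∀ k : Fin (n + 2), k ≠ 0 → (SigTildeM (n + 2) σ σ₀).adjugate k 0 = 0 := by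
    intro k hk
    rw [adjugate_apply]
    apply det_eq_zero_of_column_eq_zero 0
    intro l
    rcases eq_or_ne l 0 with rfl | hl
    · rw [updateRow_self]
      exact Pi.single_eq_of_ne (Ne.symm hk) 1
    · rw [updateRow_ne hl]
      simp [SigTildeM, hl]
  rcases h0 with h0 | h0
  · -- i = 0, so j ≠ 0
    have hi : i = 0 := Fin.ext h0
    subst hi
    have hj : j ≠ 0 := fun h => hij h.symm
    have := base j hj
    calc (SigTildeM (n + 2) σ σ₀).adjugate 0 j
        = ((SigTildeM (n + 2) σ σ₀).adjugate)ᵀ j 0 := rfl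
      _ = ((SigTildeM (n + 2) σ σ₀)ᵀ).adjugate j 0 := by rw [adjugate_transpose]
      _ = (SigTildeM (n + 2) σ σ₀).adjugate j 0 := by rw [sigT_transpose]
      _ = 0 := this
  · have hj : j = 0 := Fin.ext h0
    subst hj
    exact base i hij

theorem kl_formula_gives_one_vs_rest_mi (M : ℕ) (hM : 2 ≤ M) (σ σ₀ : ℝ)
    (hσ : 0 < σ) (hσ₀ : 0 < σ₀) :
    (1 / 2) * (((SigTildeM M σ σ₀)⁻¹ * SigM M σ σ₀).trace - M
        + Real.log ((SigTildeM M σ σ₀).det / (SigM M σ σ₀).det))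
      = (1 / 2) * Real.log
          ((1 + σ₀ ^ 2 / σ ^ 2) * (1 - σ₀ ^ 2 / (σ ^ 2 + M * σ₀ ^ 2))) := by
  obtain ⟨n, rfl⟩ : ∃ n, M = n + 2 := ⟨M - 2, by omega⟩
  have hσ2 : (σ : ℝ) ^ 2 ≠ 0 := pow_ne_zero _ hσ.ne'
  -- determinants
  have hdetS : (SigM (n + 2) σ σ₀).det
      = (σ ^ 2) ^ (n + 2) * (1 + (n + 2) * σ₀ ^ 2 / σ ^ 2) := by
    rw [sig_det _ _ _ hσ.ne']; push_cast; ring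
  have hdetT : (SigTildeM (n + 2) σ σ₀).det
      = (σ ^ 2 + σ₀ ^ 2) * ((σ ^ 2) ^ (n + 1) * (1 + (n + 1) * σ₀ ^ 2 / σ ^ 2)) := by
    rw [sigT_det, sig_det _ _ _ hσ.ne']; push_cast; ring
  have hpos1 : (0 : ℝ) < 1 + (n + 1) * σ₀ ^ 2 / σ ^ 2 := by positivity
  have hpos2 : (0 : ℝ) < 1 + (n + 2) * σ₀ ^ 2 / σ ^ 2 := by positivity
  have hdetT_ne : (SigTildeM (n + 2) σ σ₀).det ≠ 0 := by
    rw [hdetT]; positivity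
  -- trace computation
  have htr : ((SigTildeM (n + 2) σ σ₀)⁻¹ * SigM (n + 2) σ σ₀).trace = ((n : ℝ) + 2) := by
    have hsplit : SigM (n + 2) σ σ₀
        = SigTildeM (n + 2) σ σ₀ + (SigM (n + 2) σ σ₀ - SigTildeM (n + 2) σ σ₀) := by abel
    rw [hsplit, Matrix.mul_add, trace_add,
      Matrix.nonsing_inv_mul _ (isUnit_iff_ne_zero.2 hdetT_ne), trace_one]
    have hD : ((SigTildeM (n + 2) σ σ₀)⁻¹
        * (SigM (n + 2) σ σ₀ - SigTildeM (n + 2) σ σ₀)).trace = 0 := by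
      rw [Matrix.inv_def, Matrix.smul_mul, trace_smul]
      have : ((SigTildeM (n + 2) σ σ₀).adjugate
          * (SigM (n + 2) σ σ₀ - SigTildeM (n + 2) σ σ₀)).trace = 0 := by
        rw [Matrix.trace]
        apply Finset.sum_eq_zero
        intro i _
        rw [Matrix.diag_apply, Matrix.mul_apply]
        apply Finset.sum_eq_zero
        intro j _
        rcases eq_or_ne j i with rfl | hji
        · simp [SigM, SigTildeM]
        · by_cases h0 : j.val = 0 ∨ i.val = 0
          · rw [adj_zero n σ σ₀ i j (Ne.symm hji) (Or.symm h0), zero_mul]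
          · push_neg at h0
            have : (SigM (n + 2) σ σ₀ - SigTildeM (n + 2) σ σ₀) j i = 0 := by
              simp [SigM, SigTildeM, hji, h0.1, h0.2, show j ≠ 0 from fun h => h0.1 (by simp [h]),
                show i ≠ 0 from fun h => h0.2 (by simp [h])]
            rw [this, mul_zero]
      rw [this, smul_zero]
    rw [hD, add_zero]
    simp [Fintype.card_fin]
  suffices h : (SigTildeM (n + 2) σ σ₀).det / (SigM (n + 2) σ σ₀).det
      = (1 + σ₀ ^ 2 / σ ^ 2) * (1 - σ₀ ^ 2 / (σ ^ 2 + ((n + 2 : ℕ) : ℝ) * σ₀ ^ 2)) by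
    rw [htr, h]; push_cast; ring
  rw [hdetS, hdetT]
  have h2 : (σ : ℝ) ^ 2 + (((n : ℝ) + 2)) * σ₀ ^ 2 ≠ 0 := by positivity
  have h3 : ((σ : ℝ) ^ 2) ^ (n + 1) ≠ 0 := pow_ne_zero _ hσ2
  push_cast
  field_simp
  ring
end
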